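/- Let (A, B) be a separation of order two of a graph G with A ∩ B = {x, y}. Let P_1 be a maximum-length x-path in G[A] - {y}; P_2 a maximum-length y-path in G[A] - {x}; P_3 a maximum-length x-path in G[A]; P_4 a maximum-length y-path in G[A]; P_5 a maximum-length xy-path in G[A] (or empty if none exists); and P_6 a pair of vertex-disjoint paths in G[A], one ending in x and one ending in y, of maximum combined length. If G has a path of length at least k, then G[A] has a path of length at least k, or the induced subgraph of G on the union of B with the vertex sets of P_1 through P_6 has a path of length at least k. -/

import Mathlib

open SimpleGraph

variable {V : Type*}

/-- Reachability within the subgraph of `G` induced by the vertex set `W`. -/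
def ReachIn (G : SimpleGraph V) (W : Set V) (x y : V) : Prop :=
  ∃ (hx : x ∈ W) (hy : y ∈ W), (G.induce W).Reachable ⟨x, hx⟩ ⟨y, hy⟩

/-- Removing `S` disconnects some connected component of `G`: there are two vertices
outside `S` that are connected in `G` but not in `G - S`. -/
def Separates (G : SimpleGraph V) (S : Set V) : Prop :=
  ∃ u v : V, u ∉ S ∧ v ∉ S ∧ G.Reachable u v ∧ ¬ ReachIn G Sᶜ u v

/-- `S` is a minimal separator of `G`. -/
def IsMinimalSeparator (G : SimpleGraph V) (S : Set V) : Prop :=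
  Separates G S ∧ ∀ S' ⊂ S, ¬ Separates G S'

/-- `C` is a connected component of the subgraph of `G` induced by `W`. -/
def IsCompOf (G : SimpleGraph V) (C W : Set V) : Prop :=
  C ⊆ W ∧ (G.induce C).Connected ∧ ∀ u ∈ C, ∀ v ∈ W, G.Adj u v → v ∈ C

/-- A separation `(A, B)` of a graph `G`. -/
def IsSeparation (G : SimpleGraph V) (A B : Set V) : Prop :=
  A ∪ B = Set.univ ∧ ∀ u ∈ A \ B, ∀ v ∈ B \ A, ¬ G.Adj u v

/-- `(T, X)` is a tree decomposition of `G`. -/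
structure IsTreeDecomp {ι : Type*} (G : SimpleGraph V) (T : SimpleGraph ι)
    (X : ι → Set V) : Prop where
  isTree : T.IsTree
  covers_verts : ∀ v : V, ∃ i, v ∈ X i
  covers_edges : ∀ ⦃u v : V⦄, G.Adj u v → ∃ i, u ∈ X i ∧ v ∈ X i
  subtree : ∀ v : V, (T.induce {i | v ∈ X i}).Connected

/-- The tree decomposition given by the bag function `X` has adhesion at most `d`. -/
def AdhesionLE {ι : Type*} (T : SimpleGraph ι) (X : ι → Set V) (d : ℕ) : Prop :=
  ∀ ⦃i j : ι⦄, T.Adj i j → (X i ∩ X j).ncard ≤ d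

/-- The torso of the vertex set `W` in `G`: the induced subgraph `G[W]` with an edge added
between each pair of vertices of `W` connected by a path internally avoiding `W`. -/
def torso (G : SimpleGraph V) (W : Set V) : SimpleGraph W :=
  SimpleGraph.fromRel (fun u v =>
    G.Adj u v ∨ ∃ p : G.Walk (u : V) (v : V), p.IsPath ∧
      ∀ z ∈ p.support, z ≠ (u : V) → z ≠ (v : V) → z ∉ W)

/-- One smoothing step: `K` is obtained from `H` by replacing the degree-2 vertex `v`,
whose two neighbors are `a` and `b`, by a direct edge between `a` and `b`. -/
def SmoothStep (H K : SimpleGraph.Subgraph (⊤ : SimpleGraph V)) : Prop :=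
  ∃ v a b : V, a ≠ b ∧ a ≠ v ∧ b ≠ v ∧ v ∈ H.verts ∧ H.neighborSet v = {a, b} ∧
    K.verts = H.verts \ {v} ∧
    ∀ x y : V, K.Adj x y ↔ ((H.Adj x y ∧ x ≠ v ∧ y ≠ v) ∨ (x = a ∧ y = b) ∨ (x = b ∧ y = a))

/-- `K` (a graph on a subset of the vertices of `G`) is a topological minor of `G`:
it is obtained from a subgraph of `G` by repeatedly smoothing degree-2 vertices. -/
def IsTopMinor (K : SimpleGraph.Subgraph (⊤ : SimpleGraph V)) (G : SimpleGraph V) : Prop :=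
  ∃ H₀ : SimpleGraph.Subgraph (⊤ : SimpleGraph V),
    (∀ ⦃x y : V⦄, H₀.Adj x y → G.Adj x y) ∧ Relation.ReflTransGen SmoothStep H₀ K

/-- An abstract graph `H` is a topological minor of `G` if it is isomorphic to some
topological minor of `G`. -/
def IsTopMinorGraph {W : Type*} (H : SimpleGraph W) (G : SimpleGraph V) : Prop :=
  ∃ K : SimpleGraph.Subgraph (⊤ : SimpleGraph V), IsTopMinor K G ∧ Nonempty (H ≃g K.coe)

/-- One edge-contraction step: `K` is obtained from `H` by contracting the edge `{a, b}`
(the vertex `b` is merged into `a`). -/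
def ContractStep (H K : SimpleGraph.Subgraph (⊤ : SimpleGraph V)) : Prop :=
  ∃ a b : V, H.Adj a b ∧ K.verts = H.verts \ {b} ∧
    ∀ x y : V, K.Adj x y ↔ (x ≠ b ∧ y ≠ b ∧ x ≠ y ∧
      (H.Adj x y ∨ (x = a ∧ H.Adj b y) ∨ (y = a ∧ H.Adj x b)))

/-- `G` contains `Hpat` as a minor: some graph obtained from a subgraph of `G` by
contracting edges is isomorphic to `Hpat`. -/
def HasMinor {W : Type*} (G : SimpleGraph V) (Hpat : SimpleGraph W) : Prop :=
  ∃ H₀ K : SimpleGraph.Subgraph (⊤ : SimpleGraph V),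
    (∀ ⦃x y : V⦄, H₀.Adj x y → G.Adj x y) ∧ Relation.ReflTransGen ContractStep H₀ K ∧
      Nonempty (Hpat ≃g K.coe)

/-- Planarity, via Wagner's theorem: no `K₅`-minor and no `K₃,₃`-minor. -/
def IsPlanar (G : SimpleGraph V) : Prop :=
  ¬ HasMinor G (completeGraph (Fin 5)) ∧ ¬ HasMinor G (completeBipartiteGraph (Fin 3) (Fin 3))

/-- A graph is triconnected if removing fewer than three vertices cannot disconnect it. -/
def Triconnected (G : SimpleGraph V) : Prop :=
  ∀ S : Set V, S.ncard < 3 → (G.induce Sᶜ).Preconnected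

/-- A graph is claw-free if it has no induced `K_{1,3}`. -/
def ClawFree (G : SimpleGraph V) : Prop :=
  ∀ v a b c : V, G.Adj v a → G.Adj v b → G.Adj v c → a ≠ b → a ≠ c → b ≠ c →
    ¬ G.Adj a b → ¬ G.Adj a c → G.Adj b c

namespace PathSepAux

variable {V : Type*} {G : SimpleGraph V}

lemma append_shared {a b c : V} {p : G.Walk a b} {q : G.Walk b c}
    (h : (p.append q).IsPath) : ∀ z ∈ p.support, z ∈ q.support → z = b := by
  intro z hzp hzq
  have hnd := h.support_nodup
  rw [Walk.support_append, List.nodup_append] at hnd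
  rcases List.eq_or_mem_of_mem_cons (q.support_eq_cons ▸ hzq) with h1 | h1
  · exact h1
  · exact absurd rfl (hnd.2.2 z hzp z h1)

lemma isPath_append {a b c : V} {p : G.Walk a b} {q : G.Walk b c}
    (hp : p.IsPath) (hq : q.IsPath)
    (h : ∀ z ∈ p.support, z ∈ q.support → z = b) : (p.append q).IsPath := by
  rw [Walk.isPath_def, Walk.support_append, List.nodup_append]
  refine ⟨hp.support_nodup, hq.support_nodup.tail, ?_⟩
  intro z hzp z' hzq hzz'
  subst hzz'
  have hz : z ∈ q.support := by rw [q.support_eq_cons]; exact List.mem_cons_of_mem _ hzq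
  have hzb : z = b := h z hzp hz
  subst hzb
  have := hq.support_nodup
  rw [q.support_eq_cons, List.nodup_cons] at this
  exact this.1 hzq

lemma induceWalk {W : Set V} : ∀ {u v : V} (p : G.Walk u v),
    (∀ z ∈ p.support, z ∈ W) →
    ∃ (hu : u ∈ W) (hv : v ∈ W) (q : (G.induce W).Walk ⟨u, hu⟩ ⟨v, hv⟩),
      q.support.map Subtype.val = p.support := by
  intro u v p
  induction p with
  | nil =>
    intro h
    exact ⟨h _ (Walk.start_mem_support _), h _ (Walk.start_mem_support _), Walk.nil, rfl⟩
  | @cons a b v r tl ih =>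
    intro h
    have ha : a ∈ W := h _ (Walk.start_mem_support _)
    have htl : ∀ z ∈ tl.support, z ∈ W := fun z hz => h z (by simp [hz])
    obtain ⟨hb, hv, q, hq⟩ := ih htl
    have adj : (G.induce W).Adj ⟨a, ha⟩ ⟨b, hb⟩ := r
    exact ⟨ha, hv, Walk.cons adj q, by simp [hq]⟩

lemma induceWalk' {W : Set V} {u v : V} (p : G.Walk u v) (h : ∀ z ∈ p.support, z ∈ W) :
    ∃ (hu : u ∈ W) (hv : v ∈ W) (q : (G.induce W).Walk ⟨u, hu⟩ ⟨v, hv⟩),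
      q.length = p.length ∧ (p.IsPath → q.IsPath) := by
  obtain ⟨hu, hv, q, hq⟩ := induceWalk p h
  refine ⟨hu, hv, q, ?_, ?_⟩
  · have := congrArg List.length hq
    rw [List.length_map, Walk.length_support, Walk.length_support] at this
    omega
  · intro hp
    rw [Walk.isPath_def]
    exact (hq ▸ hp.support_nodup).of_map

/-- The natural hom from an induced subgraph to the ambient graph. -/
def valHom (G : SimpleGraph V) (W : Set V) : G.induce W →g G :=
  ⟨Subtype.val, fun h => h⟩

/-- Map a walk in an induced subgraph back to `G`. -/
lemma mapWalk {W : Set V} {a b : ↥W} (q : (G.induce W).Walk a b) (hq : q.IsPath) :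
    ∃ p : G.Walk (a : V) (b : V), p.IsPath ∧ p.length = q.length ∧
      p.support = q.support.map Subtype.val := by
  refine ⟨q.map (valHom G W), ?_, ?_, ?_⟩
  · exact q.map_isPath_of_injective (fun c d h => Subtype.val_injective h) hq
  · exact Walk.length_map (f := valHom G W) (p := q)
  · exact Walk.support_map (f := valHom G W) (p := q)

lemma induceWalk2 {W : Set V} {u v : V} (p : G.Walk u v) (h : ∀ z ∈ p.support, z ∈ W) :
    ∃ (hu : u ∈ W) (hv : v ∈ W) (q : (G.induce W).Walk ⟨u, hu⟩ ⟨v, hv⟩),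
      q.length = p.length ∧ (p.IsPath → q.IsPath) ∧
        q.support.map Subtype.val = p.support := by
  obtain ⟨hu, hv, q, hq⟩ := induceWalk p h
  refine ⟨hu, hv, q, ?_, ?_, hq⟩
  · have := congrArg List.length hq
    rw [List.length_map, Walk.length_support, Walk.length_support] at this
    omega
  · intro hp
    rw [Walk.isPath_def]
    exact (hq ▸ hp.support_nodup).of_map

lemma side (A B : Set V) (hcov : A ∪ B = Set.univ)
    (hadj : ∀ u ∈ A \ B, ∀ v ∈ B \ A, ¬ G.Adj u v) :
    ∀ {u v : V} (P : G.Walk u v), P.IsPath →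
      (∀ z ∈ P.support, z = u ∨ z = v ∨ z ∉ A ∩ B) →
      (∀ z ∈ P.support, z ∈ A) ∨ (∀ z ∈ P.support, z ∈ B) := by
  intro u v P
  induction P with
  | nil =>
    rename_i w
    intro _ _
    have hw : w ∈ A ∪ B := by rw [hcov]; trivial
    rw [Set.mem_union] at hw
    rcases hw with h | h
    · exact Or.inl (fun z hz => by rw [Walk.mem_support_nil_iff] at hz; exact hz ▸ h)
    · exact Or.inr (fun z hz => by rw [Walk.mem_support_nil_iff] at hz; exact hz ▸ h)
  | cons r tl ih =>
    rename_i a b v'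
    intro hP h
    have htlP : tl.IsPath := hP.of_cons
    have hnotin : a ∉ tl.support := ((Walk.cons_isPath_iff r tl).mp hP).2
    have htl : ∀ z ∈ tl.support, z = b ∨ z = v' ∨ z ∉ A ∩ B := by
      intro z hz
      rcases h z (by simp [hz]) with rfl | h' | h'
      · exact absurd hz hnotin
      · exact Or.inr (Or.inl h')
      · exact Or.inr (Or.inr h')
    have hbmem : b ∈ (Walk.cons r tl).support := by simp
    have hacov : a ∈ A ∪ B := by rw [hcov]; trivial
    rw [Set.mem_union] at hacov
    rcases ih htlP htl with hA | hB
    · by_cases haA : a ∈ A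
      · left
        intro z hz
        rw [Walk.support_cons, List.mem_cons] at hz
        rcases hz with rfl | hz'
        · exact haA
        · exact hA z hz'
      · have haB : a ∈ B := by rcases hacov with h' | h'; exact absurd h' haA; exact h'
        have hbA : b ∈ A := hA b tl.start_mem_support
        by_cases hbB : b ∈ B
        · have hbv : b = v' := by
            rcases h b hbmem with rfl | h' | h'
            · exact absurd hbA haA
            · exact h'
            · exact absurd ⟨hbA, hbB⟩ h'
          subst hbv
          have htn : tl = Walk.nil := Walk.isPath_iff_eq_nil.mp htlP
          subst htn
          right
          intro z hz
          simp only [Walk.support_cons, Walk.support_nil, List.mem_cons,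
            List.mem_singleton] at hz
          rcases hz with rfl | rfl | hf
          · exact haB
          · exact hbB
          · exact absurd hf List.not_mem_nil
        · exact absurd r.symm (hadj b ⟨hbA, hbB⟩ a ⟨haB, haA⟩)
    · by_cases haB : a ∈ B
      · right
        intro z hz
        rw [Walk.support_cons, List.mem_cons] at hz
        rcases hz with rfl | hz'
        · exact haB
        · exact hB z hz'
      · have haA : a ∈ A := by rcases hacov with h' | h'; exact h'; exact absurd h' haB
        have hbB : b ∈ B := hB b tl.start_mem_support
        by_cases hbA : b ∈ A
        · have hbv : b = v' := by
            rcases h b hbmem with rfl | h' | h'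
            · exact absurd hbB haB
            · exact h'
            · exact absurd ⟨hbA, hbB⟩ h'
          subst hbv
          have htn : tl = Walk.nil := Walk.isPath_iff_eq_nil.mp htlP
          subst htn
          left
          intro z hz
          simp only [Walk.support_cons, Walk.support_nil, List.mem_cons,
            List.mem_singleton] at hz
          rcases hz with rfl | rfl | hf
          · exact haA
          · exact hbA
          · exact absurd hf List.not_mem_nil
        · exact absurd r (hadj a ⟨haA, haB⟩ b ⟨hbB, hbA⟩)

lemma split3 {u v x y : V} (P : G.Walk u v) (hx : x ∈ P.support) (hy : y ∈ P.support) :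
    (∃ (Q1 : G.Walk u x) (Q2 : G.Walk x y) (Q3 : G.Walk y v),
      P = (Q1.append Q2).append Q3) ∨
    (∃ (Q1 : G.Walk u y) (Q2 : G.Walk y x) (Q3 : G.Walk x v),
      P = (Q1.append Q2).append Q3) := by
  obtain ⟨Q, R, rfl⟩ := Walk.mem_support_iff_exists_append.mp hx
  rcases (Walk.mem_support_append_iff Q R).mp hy with h | h
  · right
    obtain ⟨Q1, Q2, hQ⟩ := Walk.mem_support_iff_exists_append.mp h
    exact ⟨Q1, Q2, R, by rw [hQ]⟩
  · left
    obtain ⟨R1, R2, hR⟩ := Walk.mem_support_iff_exists_append.mp h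
    exact ⟨Q, R1, R2, by rw [hR, Walk.append_assoc]⟩

/-- `GoodIn G k W` : there is a path of length at least `k` with all vertices in `W`. -/
def GoodIn (G : SimpleGraph V) (k : ℕ) (W : Set V) : Prop :=
  ∃ (a b : V) (Q : G.Walk a b), Q.IsPath ∧ k ≤ Q.length ∧ ∀ z ∈ Q.support, z ∈ W


section Main

variable {V : Type*} {G : SimpleGraph V} {A B U : Set V} {x y : V} {k : ℕ}

lemma aux_single (hcov : A ∪ B = Set.univ)
    (hadj : ∀ u ∈ A \ B, ∀ v ∈ B \ A, ¬ G.Adj u v)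
    (hAB : A ∩ B = {x, y}) (hxy : x ≠ y) (hBU : B ⊆ U)
    (HX : ∀ (w' : V) (q : G.Walk x w'), q.IsPath → (∀ a ∈ q.support, a ∈ A \ {y}) →
      ∃ (z : V) (p : G.Walk x z), p.IsPath ∧ (∀ a ∈ p.support, a ∈ U) ∧
        (∀ a ∈ p.support, a ∈ A \ {y}) ∧ q.length ≤ p.length)
    {u v : V} (P : G.Walk u v) (hP : P.IsPath) (hk : k ≤ P.length)
    (hx : x ∈ P.support) (hy : y ∉ P.support) :
    GoodIn G k A ∨ GoodIn G k U := by
  obtain ⟨Q, R, rfl⟩ := Walk.mem_support_iff_exists_append.mp hx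
  have hQ : Q.IsPath := hP.of_append_left
  have hR : R.IsPath := hP.of_append_right
  have hlen : (Q.append R).length = Q.length + R.length := Walk.length_append Q R
  have hyQ : y ∉ Q.support := fun h => hy ((Walk.mem_support_append_iff Q R).mpr (Or.inl h))
  have hyR : y ∉ R.support := fun h => hy ((Walk.mem_support_append_iff Q R).mpr (Or.inr h))
  have intQ : ∀ z ∈ Q.support, z = u ∨ z = x ∨ z ∉ A ∩ B := by
    intro z hz
    by_cases hzAB : z ∈ A ∩ B
    · rw [hAB] at hzAB
      rcases hzAB with rfl | rfl
      · exact Or.inr (Or.inl rfl)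
      · exact absurd hz hyQ
    · exact Or.inr (Or.inr hzAB)
  have intR : ∀ z ∈ R.support, z = x ∨ z = v ∨ z ∉ A ∩ B := by
    intro z hz
    by_cases hzAB : z ∈ A ∩ B
    · rw [hAB] at hzAB
      rcases hzAB with rfl | rfl
      · exact Or.inl rfl
      · exact absurd hz hyR
    · exact Or.inr (Or.inr hzAB)
  rcases side A B hcov hadj Q hQ intQ with qA | qB <;>
    rcases side A B hcov hadj R hR intR with rA | rB
  · -- both in A
    left
    exact ⟨u, v, Q.append R, hP, hk, fun z hz => by
      rcases (Walk.mem_support_append_iff Q R).mp hz with h | h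
      exacts [qA z h, rA z h]⟩
  · -- Q in A, R in B
    obtain ⟨z, p, hp, hpU, hpAy, hlp⟩ := HX u Q.reverse hQ.reverse (by
      intro a ha
      rw [Walk.support_reverse, List.mem_reverse] at ha
      exact ⟨qA a ha, fun h => hyQ (h ▸ ha)⟩)
    rw [Walk.length_reverse] at hlp
    right
    refine ⟨z, v, p.reverse.append R, ?_, ?_, ?_⟩
    · refine isPath_append hp.reverse hR ?_
      intro a ha hb
      rw [Walk.support_reverse, List.mem_reverse] at ha
      have haA : a ∈ A := (hpAy a ha).1
      have : a ∈ A ∩ B := ⟨haA, rB a hb⟩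
      rw [hAB] at this
      rcases this with h' | h'
      · exact h'
      · exact absurd h' ((hpAy a ha).2)
    · rw [Walk.length_append, Walk.length_reverse]
      omega
    · intro a ha
      rcases (Walk.mem_support_append_iff _ _).mp ha with h | h
      · rw [Walk.support_reverse, List.mem_reverse] at h
        exact hpU a h
      · exact hBU (rB a h)
  · -- Q in B, R in A
    obtain ⟨z, p, hp, hpU, hpAy, hlp⟩ := HX v R hR (by
      intro a ha
      exact ⟨rA a ha, fun h => hyR (h ▸ ha)⟩)
    right
    refine ⟨u, z, Q.append p, ?_, ?_, ?_⟩
    · refine isPath_append hQ hp ?_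
      intro a ha hb
      have : a ∈ A ∩ B := ⟨(hpAy a hb).1, qB a ha⟩
      rw [hAB] at this
      rcases this with h' | h'
      · exact h'
      · exact absurd h' ((hpAy a hb).2)
    · rw [Walk.length_append]
      omega
    · intro a ha
      rcases (Walk.mem_support_append_iff _ _).mp ha with h | h
      · exact hBU (qB a h)
      · exact hpU a h
  · -- both in B
    right
    exact ⟨u, v, Q.append R, hP, hk, fun z hz => by
      rcases (Walk.mem_support_append_iff Q R).mp hz with h | h
      exacts [hBU (qB z h), hBU (rB z h)]⟩

lemma aux_both (hcov : A ∪ B = Set.univ)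
    (hadj : ∀ u ∈ A \ B, ∀ v ∈ B \ A, ¬ G.Adj u v)
    (hAB : A ∩ B = {x, y}) (hxy : x ≠ y) (hBU : B ⊆ U)
    (HX : ∀ (w' : V) (q : G.Walk x w'), q.IsPath → (∀ a ∈ q.support, a ∈ A \ {y}) →
      ∃ (z : V) (p : G.Walk x z), p.IsPath ∧ (∀ a ∈ p.support, a ∈ U) ∧
        (∀ a ∈ p.support, a ∈ A \ {y}) ∧ q.length ≤ p.length)
    (HY : ∀ (w' : V) (q : G.Walk y w'), q.IsPath → (∀ a ∈ q.support, a ∈ A \ {x}) →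
      ∃ (z : V) (p : G.Walk y z), p.IsPath ∧ (∀ a ∈ p.support, a ∈ U) ∧
        (∀ a ∈ p.support, a ∈ A \ {x}) ∧ q.length ≤ p.length)
    (HXA : ∀ (w' : V) (q : G.Walk x w'), q.IsPath → (∀ a ∈ q.support, a ∈ A) →
      ∃ (z : V) (p : G.Walk x z), p.IsPath ∧ (∀ a ∈ p.support, a ∈ U) ∧
        (∀ a ∈ p.support, a ∈ A) ∧ q.length ≤ p.length)
    (HYA : ∀ (w' : V) (q : G.Walk y w'), q.IsPath → (∀ a ∈ q.support, a ∈ A) →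
      ∃ (z : V) (p : G.Walk y z), p.IsPath ∧ (∀ a ∈ p.support, a ∈ U) ∧
        (∀ a ∈ p.support, a ∈ A) ∧ q.length ≤ p.length)
    (H5 : ∀ (q : G.Walk x y), q.IsPath → (∀ a ∈ q.support, a ∈ A) →
      ∃ p : G.Walk x y, p.IsPath ∧ (∀ a ∈ p.support, a ∈ U) ∧
        (∀ a ∈ p.support, a ∈ A) ∧ q.length ≤ p.length)
    (H6 : ∀ (z' w' : V) (p' : G.Walk x z') (q' : G.Walk y w'), p'.IsPath → q'.IsPath →
      (∀ a ∈ p'.support, a ∈ A) → (∀ a ∈ q'.support, a ∈ A) →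
      (∀ a ∈ p'.support, a ∉ q'.support) →
      ∃ (z w : V) (p : G.Walk x z) (q : G.Walk y w), p.IsPath ∧ q.IsPath ∧
        (∀ a ∈ p.support, a ∉ q.support) ∧ (∀ a ∈ p.support, a ∈ U) ∧
        (∀ a ∈ q.support, a ∈ U) ∧ (∀ a ∈ p.support, a ∈ A) ∧
        (∀ a ∈ q.support, a ∈ A) ∧ p'.length + q'.length ≤ p.length + q.length)
    {u v : V} (Q1 : G.Walk u x) (Q2 : G.Walk x y) (Q3 : G.Walk y v)
    (hP : ((Q1.append Q2).append Q3).IsPath)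
    (hk : k ≤ ((Q1.append Q2).append Q3).length) :
    GoodIn G k A ∨ GoodIn G k U := by
  have hQ12 : (Q1.append Q2).IsPath := hP.of_append_left
  have hQ1 : Q1.IsPath := hQ12.of_append_left
  have hQ2 : Q2.IsPath := hQ12.of_append_right
  have hQ3 : Q3.IsPath := hP.of_append_right
  have hQ23 : (Q2.append Q3).IsPath := by
    have := hP
    rw [← Walk.append_assoc] at this
    exact this.of_append_right
  have shared12 : ∀ z ∈ Q1.support, z ∈ Q2.support → z = x := append_shared hQ12
  have shared123 : ∀ z ∈ (Q1.append Q2).support, z ∈ Q3.support → z = y := append_shared hP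
  have hyQ1 : y ∉ Q1.support := fun h =>
    hxy ((shared12 y h Q2.end_mem_support).symm)
  have hxQ3 : x ∉ Q3.support := fun h =>
    hxy (shared123 x ((Walk.mem_support_append_iff Q1 Q2).mpr (Or.inr Q2.start_mem_support)) h)
  have hQ1Q3 : ∀ z ∈ Q1.support, z ∉ Q3.support := fun z hz h3 => by
    have := shared123 z ((Walk.mem_support_append_iff Q1 Q2).mpr (Or.inl hz)) h3
    exact hyQ1 (this ▸ hz)
  have hlen : ((Q1.append Q2).append Q3).length = Q1.length + Q2.length + Q3.length := by
    rw [Walk.length_append, Walk.length_append]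
  have int1 : ∀ z ∈ Q1.support, z = u ∨ z = x ∨ z ∉ A ∩ B := by
    intro z hz
    by_cases hzAB : z ∈ A ∩ B
    · rw [hAB] at hzAB
      rcases hzAB with rfl | rfl
      · exact Or.inr (Or.inl rfl)
      · exact absurd hz hyQ1
    · exact Or.inr (Or.inr hzAB)
  have int2 : ∀ z ∈ Q2.support, z = x ∨ z = y ∨ z ∉ A ∩ B := by
    intro z hz
    by_cases hzAB : z ∈ A ∩ B
    · rw [hAB] at hzAB
      rcases hzAB with rfl | rfl
      · exact Or.inl rfl
      · exact Or.inr (Or.inl rfl)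
    · exact Or.inr (Or.inr hzAB)
  have int3 : ∀ z ∈ Q3.support, z = y ∨ z = v ∨ z ∉ A ∩ B := by
    intro z hz
    by_cases hzAB : z ∈ A ∩ B
    · rw [hAB] at hzAB
      rcases hzAB with rfl | rfl
      · exact absurd hz hxQ3
      · exact Or.inl rfl
    · exact Or.inr (Or.inr hzAB)
  rcases side A B hcov hadj Q1 hQ1 int1 with s1A | s1B <;>
    rcases side A B hcov hadj Q2 hQ2 int2 with s2A | s2B <;>
      rcases side A B hcov hadj Q3 hQ3 int3 with s3A | s3B
  · -- A A A
    left
    refine ⟨u, v, (Q1.append Q2).append Q3, hP, hk, ?_⟩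
    intro z hz
    rcases (Walk.mem_support_append_iff _ _).mp hz with h | h
    · rcases (Walk.mem_support_append_iff _ _).mp h with h' | h'
      exacts [s1A z h', s2A z h']
    · exact s3A z h
  · -- A A B : use HYA on (Q1.append Q2).reverse
    obtain ⟨z, p, hp, hpU, hpA, hlp⟩ := HYA u (Q1.append Q2).reverse hQ12.reverse (by
      intro a ha
      rw [Walk.support_reverse, List.mem_reverse] at ha
      rcases (Walk.mem_support_append_iff _ _).mp ha with h | h
      exacts [s1A a h, s2A a h])
    rw [Walk.length_reverse, Walk.length_append] at hlp
    right
    refine ⟨z, v, p.reverse.append Q3, ?_, ?_, ?_⟩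
    · refine isPath_append hp.reverse hQ3 ?_
      intro a ha hb
      rw [Walk.support_reverse, List.mem_reverse] at ha
      have : a ∈ A ∩ B := ⟨hpA a ha, s3B a hb⟩
      rw [hAB] at this
      rcases this with rfl | rfl
      · exact absurd hb hxQ3
      · rfl
    · rw [Walk.length_append, Walk.length_reverse]
      omega
    · intro a ha
      rcases (Walk.mem_support_append_iff _ _).mp ha with h | h
      · rw [Walk.support_reverse, List.mem_reverse] at h
        exact hpU a h
      · exact hBU (s3B a h)
  · -- A B A : use H6
    obtain ⟨z, w, p, q, hp, hq, hdisj, hpU, hqU, hpA, hqA, hsum⟩ :=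
      H6 u v Q1.reverse Q3 hQ1.reverse hQ3
        (by intro a ha; rw [Walk.support_reverse, List.mem_reverse] at ha; exact s1A a ha)
        s3A
        (by intro a ha; rw [Walk.support_reverse, List.mem_reverse] at ha; exact hQ1Q3 a ha)
    rw [Walk.length_reverse] at hsum
    have hxq : x ∉ q.support := fun h => hdisj x p.start_mem_support h
    have hyp : y ∉ p.support := fun h => hdisj y h q.start_mem_support
    have hinner : (Q2.append q).IsPath := by
      refine isPath_append hQ2 hq ?_
      intro a ha hb
      have : a ∈ A ∩ B := ⟨hqA a hb, s2B a ha⟩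
      rw [hAB] at this
      rcases this with rfl | rfl
      · exact absurd hb hxq
      · rfl
    right
    refine ⟨z, w, p.reverse.append (Q2.append q), ?_, ?_, ?_⟩
    · refine isPath_append hp.reverse hinner ?_
      intro a ha hb
      rw [Walk.support_reverse, List.mem_reverse] at ha
      rcases (Walk.mem_support_append_iff _ _).mp hb with h | h
      · have : a ∈ A ∩ B := ⟨hpA a ha, s2B a h⟩
        rw [hAB] at this
        rcases this with rfl | rfl
        · rfl
        · exact absurd ha hyp
      · exact absurd h (hdisj a ha)
    · rw [Walk.length_append, Walk.length_reverse, Walk.length_append]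
      omega
    · intro a ha
      rcases (Walk.mem_support_append_iff _ _).mp ha with h | h
      · rw [Walk.support_reverse, List.mem_reverse] at h
        exact hpU a h
      · rcases (Walk.mem_support_append_iff _ _).mp h with h' | h'
        exacts [hBU (s2B a h'), hqU a h']
  · -- A B B : use HX on Q1.reverse
    obtain ⟨z, p, hp, hpU, hpAy, hlp⟩ := HX u Q1.reverse hQ1.reverse (by
      intro a ha
      rw [Walk.support_reverse, List.mem_reverse] at ha
      exact ⟨s1A a ha, fun h => hyQ1 (h ▸ ha)⟩)
    rw [Walk.length_reverse] at hlp
    right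
    refine ⟨z, v, p.reverse.append (Q2.append Q3), ?_, ?_, ?_⟩
    · refine isPath_append hp.reverse hQ23 ?_
      intro a ha hb
      rw [Walk.support_reverse, List.mem_reverse] at ha
      have haB : a ∈ B := by
        rcases (Walk.mem_support_append_iff _ _).mp hb with h | h
        exacts [s2B a h, s3B a h]
      have : a ∈ A ∩ B := ⟨(hpAy a ha).1, haB⟩
      rw [hAB] at this
      rcases this with h' | h'
      · exact h'
      · exact absurd h' ((hpAy a ha).2)
    · rw [Walk.length_append, Walk.length_reverse, Walk.length_append]
      omega
    · intro a ha
      rcases (Walk.mem_support_append_iff _ _).mp ha with h | h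
      · rw [Walk.support_reverse, List.mem_reverse] at h
        exact hpU a h
      · rcases (Walk.mem_support_append_iff _ _).mp h with h' | h'
        exacts [hBU (s2B a h'), hBU (s3B a h')]
  · -- B A A : use HXA on Q2.append Q3
    obtain ⟨z, p, hp, hpU, hpA, hlp⟩ := HXA v (Q2.append Q3) hQ23 (by
      intro a ha
      rcases (Walk.mem_support_append_iff _ _).mp ha with h | h
      exacts [s2A a h, s3A a h])
    rw [Walk.length_append] at hlp
    right
    refine ⟨u, z, Q1.append p, ?_, ?_, ?_⟩
    · refine isPath_append hQ1 hp ?_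
      intro a ha hb
      have : a ∈ A ∩ B := ⟨hpA a hb, s1B a ha⟩
      rw [hAB] at this
      rcases this with rfl | rfl
      · rfl
      · exact absurd ha hyQ1
    · rw [Walk.length_append]
      omega
    · intro a ha
      rcases (Walk.mem_support_append_iff _ _).mp ha with h | h
      exacts [hBU (s1B a h), hpU a h]
  · -- B A B : use H5 on Q2
    obtain ⟨p, hp, hpU, hpA, hlp⟩ := H5 Q2 hQ2 s2A
    have hpq3 : (p.append Q3).IsPath := by
      refine isPath_append hp hQ3 ?_
      intro a ha hb
      have : a ∈ A ∩ B := ⟨hpA a ha, s3B a hb⟩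
      rw [hAB] at this
      rcases this with rfl | rfl
      · exact absurd hb hxQ3
      · rfl
    right
    refine ⟨u, v, Q1.append (p.append Q3), ?_, ?_, ?_⟩
    · refine isPath_append hQ1 hpq3 ?_
      intro a ha hb
      rcases (Walk.mem_support_append_iff _ _).mp hb with h | h
      · have : a ∈ A ∩ B := ⟨hpA a h, s1B a ha⟩
        rw [hAB] at this
        rcases this with rfl | rfl
        · rfl
        · exact absurd ha hyQ1
      · exact absurd h (hQ1Q3 a ha)
    · rw [Walk.length_append, Walk.length_append]
      omega
    · intro a ha
      rcases (Walk.mem_support_append_iff _ _).mp ha with h | h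
      · exact hBU (s1B a h)
      · rcases (Walk.mem_support_append_iff _ _).mp h with h' | h'
        exacts [hpU a h', hBU (s3B a h')]
  · -- B B A : use HY on Q3
    obtain ⟨z, p, hp, hpU, hpAx, hlp⟩ := HY v Q3 hQ3 (by
      intro a ha
      exact ⟨s3A a ha, fun h => hxQ3 (h ▸ ha)⟩)
    right
    refine ⟨u, z, (Q1.append Q2).append p, ?_, ?_, ?_⟩
    · refine isPath_append hQ12 hp ?_
      intro a ha hb
      have haB : a ∈ B := by
        rcases (Walk.mem_support_append_iff _ _).mp ha with h | h
        exacts [s1B a h, s2B a h]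
      have : a ∈ A ∩ B := ⟨(hpAx a hb).1, haB⟩
      rw [hAB] at this
      rcases this with h' | h'
      · exact absurd h' ((hpAx a hb).2)
      · exact h'
    · rw [Walk.length_append, Walk.length_append]
      omega
    · intro a ha
      rcases (Walk.mem_support_append_iff _ _).mp ha with h | h
      · rcases (Walk.mem_support_append_iff _ _).mp h with h' | h'
        exacts [hBU (s1B a h'), hBU (s2B a h')]
      · exact hpU a h
  · -- B B B
    right
    refine ⟨u, v, (Q1.append Q2).append Q3, hP, hk, ?_⟩
    intro z hz
    rcases (Walk.mem_support_append_iff _ _).mp hz with h | h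
    · rcases (Walk.mem_support_append_iff _ _).mp h with h' | h'
      exacts [hBU (s1B z h'), hBU (s2B z h')]
    · exact hBU (s3B z h)

end Main

end PathSepAux



/-- Reducing a `k`-path across a separation of order two with separator `{x, y}`:
given the six maximum-length witness structures `P₁, …, P₆` in `G[A]`, if `G` has a path
of length at least `k`, then `G[A]` or the induced subgraph on
`V(P₁) ∪ ⋯ ∪ V(P₆) ∪ B` has a path of length at least `k`. -/
theorem paths_through_separation [Fintype V] (G : SimpleGraph V) (k : ℕ)
    (A B : Set V) (x y : V) (hsep : IsSeparation G A B) (hAB : A ∩ B = {x, y})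
    (hxy : x ≠ y) (hxA : x ∈ A) (hyA : y ∈ A)
    (S1 S2 S3 S4 S5 S6 : Set V)
    -- P₁ : a maximum-length x-path in G[A] - {y}
    (hS1 : ∃ (hx1 : x ∈ A \ {y}) (z : ↥(A \ {y}))
        (p : (G.induce (A \ {y})).Walk ⟨x, hx1⟩ z), p.IsPath ∧
        (∀ (w : ↥(A \ {y})) (q : (G.induce (A \ {y})).Walk ⟨x, hx1⟩ w),
          q.IsPath → q.length ≤ p.length) ∧
        S1 = Subtype.val '' {a | a ∈ p.support})
    -- P₂ : a maximum-length y-path in G[A] - {x}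
    (hS2 : ∃ (hy2 : y ∈ A \ {x}) (z : ↥(A \ {x}))
        (p : (G.induce (A \ {x})).Walk ⟨y, hy2⟩ z), p.IsPath ∧
        (∀ (w : ↥(A \ {x})) (q : (G.induce (A \ {x})).Walk ⟨y, hy2⟩ w),
          q.IsPath → q.length ≤ p.length) ∧
        S2 = Subtype.val '' {a | a ∈ p.support})
    -- P₃ : a maximum-length x-path in G[A]
    (hS3 : ∃ (z : A) (p : (G.induce A).Walk ⟨x, hxA⟩ z), p.IsPath ∧
        (∀ (w : A) (q : (G.induce A).Walk ⟨x, hxA⟩ w), q.IsPath → q.length ≤ p.length) ∧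
        S3 = Subtype.val '' {a | a ∈ p.support})
    -- P₄ : a maximum-length y-path in G[A]
    (hS4 : ∃ (z : A) (p : (G.induce A).Walk ⟨y, hyA⟩ z), p.IsPath ∧
        (∀ (w : A) (q : (G.induce A).Walk ⟨y, hyA⟩ w), q.IsPath → q.length ≤ p.length) ∧
        S4 = Subtype.val '' {a | a ∈ p.support})
    -- P₅ : a maximum-length xy-path in G[A], or ∅ if none exists
    (hS5 : (∃ p : (G.induce A).Walk ⟨x, hxA⟩ ⟨y, hyA⟩, p.IsPath ∧
        (∀ q : (G.induce A).Walk ⟨x, hxA⟩ ⟨y, hyA⟩, q.IsPath → q.length ≤ p.length) ∧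
        S5 = Subtype.val '' {a | a ∈ p.support}) ∨
      ((¬ ∃ p : (G.induce A).Walk ⟨x, hxA⟩ ⟨y, hyA⟩, p.IsPath) ∧ S5 = ∅))
    -- P₆ : two vertex-disjoint paths in G[A], an x-path and a y-path, of maximum
    -- combined length
    (hS6 : ∃ (z w : A) (p : (G.induce A).Walk ⟨x, hxA⟩ z)
        (q : (G.induce A).Walk ⟨y, hyA⟩ w), p.IsPath ∧ q.IsPath ∧
        (∀ a ∈ p.support, a ∉ q.support) ∧
        (∀ (z' w' : A) (p' : (G.induce A).Walk ⟨x, hxA⟩ z')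
          (q' : (G.induce A).Walk ⟨y, hyA⟩ w'), p'.IsPath → q'.IsPath →
          (∀ a ∈ p'.support, a ∉ q'.support) →
          p'.length + q'.length ≤ p.length + q.length) ∧
        S6 = Subtype.val '' {a | a ∈ p.support} ∪ Subtype.val '' {a | a ∈ q.support})
    (hk : ∃ (u v : V) (P : G.Walk u v), P.IsPath ∧ k ≤ P.length) :
    (∃ (u v : A) (P : (G.induce A).Walk u v), P.IsPath ∧ k ≤ P.length) ∨
    (∃ (u v : ↥(S1 ∪ S2 ∪ S3 ∪ S4 ∪ S5 ∪ S6 ∪ B))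
      (P : (G.induce (S1 ∪ S2 ∪ S3 ∪ S4 ∪ S5 ∪ S6 ∪ B)).Walk u v),
        P.IsPath ∧ k ≤ P.length) := by
  classical
  obtain ⟨pu, pv, P, hP, hkP⟩ := hk
  set U : Set V := S1 ∪ S2 ∪ S3 ∪ S4 ∪ S5 ∪ S6 ∪ B with hUdef
  have hcov : A ∪ B = Set.univ := hsep.1
  have hadj : ∀ u ∈ A \ B, ∀ v ∈ B \ A, ¬ G.Adj u v := hsep.2
  have hS1U : S1 ⊆ U := fun a ha => by
    rw [hUdef]; simp only [Set.mem_union]; tauto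
  have hS2U : S2 ⊆ U := fun a ha => by
    rw [hUdef]; simp only [Set.mem_union]; tauto
  have hS3U : S3 ⊆ U := fun a ha => by
    rw [hUdef]; simp only [Set.mem_union]; tauto
  have hS4U : S4 ⊆ U := fun a ha => by
    rw [hUdef]; simp only [Set.mem_union]; tauto
  have hS5U : S5 ⊆ U := fun a ha => by
    rw [hUdef]; simp only [Set.mem_union]; tauto
  have hS6U : S6 ⊆ U := fun a ha => by
    rw [hUdef]; simp only [Set.mem_union]; tauto
  have hBU : B ⊆ U := fun a ha => by
    rw [hUdef]; simp only [Set.mem_union]; tauto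
  -- G-level versions of the six maximality hypotheses
  have HX : ∀ (w' : V) (q : G.Walk x w'), q.IsPath → (∀ a ∈ q.support, a ∈ A \ {y}) →
      ∃ (z : V) (p : G.Walk x z), p.IsPath ∧ (∀ a ∈ p.support, a ∈ U) ∧
        (∀ a ∈ p.support, a ∈ A \ {y}) ∧ q.length ≤ p.length := by
    obtain ⟨hx1, z, p, hp, hmax, hS1eq⟩ := hS1
    obtain ⟨pG, hpG, hpGlen, hpGsupp⟩ := PathSepAux.mapWalk p hp
    intro w' q hq hqA
    obtain ⟨hu', hw', q', hq'len, hq'path⟩ := PathSepAux.induceWalk' q hqA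
    refine ⟨(z : V), pG, hpG, ?_, ?_, ?_⟩
    · intro a ha
      rw [hpGsupp] at ha
      rcases List.mem_map.mp ha with ⟨c, hc, rfl⟩
      exact hS1U (hS1eq ▸ ⟨c, hc, rfl⟩)
    · intro a ha
      rw [hpGsupp] at ha
      rcases List.mem_map.mp ha with ⟨c, _, rfl⟩
      exact c.2
    · have hle := hmax ⟨w', hw'⟩ q' (hq'path hq)
      omega
  have HY : ∀ (w' : V) (q : G.Walk y w'), q.IsPath → (∀ a ∈ q.support, a ∈ A \ {x}) →
      ∃ (z : V) (p : G.Walk y z), p.IsPath ∧ (∀ a ∈ p.support, a ∈ U) ∧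
        (∀ a ∈ p.support, a ∈ A \ {x}) ∧ q.length ≤ p.length := by
    obtain ⟨hy2, z, p, hp, hmax, hS2eq⟩ := hS2
    obtain ⟨pG, hpG, hpGlen, hpGsupp⟩ := PathSepAux.mapWalk p hp
    intro w' q hq hqA
    obtain ⟨hu', hw', q', hq'len, hq'path⟩ := PathSepAux.induceWalk' q hqA
    refine ⟨(z : V), pG, hpG, ?_, ?_, ?_⟩
    · intro a ha
      rw [hpGsupp] at ha
      rcases List.mem_map.mp ha with ⟨c, hc, rfl⟩
      exact hS2U (hS2eq ▸ ⟨c, hc, rfl⟩)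
    · intro a ha
      rw [hpGsupp] at ha
      rcases List.mem_map.mp ha with ⟨c, _, rfl⟩
      exact c.2
    · have hle := hmax ⟨w', hw'⟩ q' (hq'path hq)
      omega
  have HXA : ∀ (w' : V) (q : G.Walk x w'), q.IsPath → (∀ a ∈ q.support, a ∈ A) →
      ∃ (z : V) (p : G.Walk x z), p.IsPath ∧ (∀ a ∈ p.support, a ∈ U) ∧
        (∀ a ∈ p.support, a ∈ A) ∧ q.length ≤ p.length := by
    obtain ⟨z, p, hp, hmax, hS3eq⟩ := hS3
    obtain ⟨pG, hpG, hpGlen, hpGsupp⟩ := PathSepAux.mapWalk p hp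
    intro w' q hq hqA
    obtain ⟨hu', hw', q', hq'len, hq'path⟩ := PathSepAux.induceWalk' q hqA
    refine ⟨(z : V), pG, hpG, ?_, ?_, ?_⟩
    · intro a ha
      rw [hpGsupp] at ha
      rcases List.mem_map.mp ha with ⟨c, hc, rfl⟩
      exact hS3U (hS3eq ▸ ⟨c, hc, rfl⟩)
    · intro a ha
      rw [hpGsupp] at ha
      rcases List.mem_map.mp ha with ⟨c, _, rfl⟩
      exact c.2
    · have hle := hmax ⟨w', hw'⟩ q' (hq'path hq)
      omega
  have HYA : ∀ (w' : V) (q : G.Walk y w'), q.IsPath → (∀ a ∈ q.support, a ∈ A) →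
      ∃ (z : V) (p : G.Walk y z), p.IsPath ∧ (∀ a ∈ p.support, a ∈ U) ∧
        (∀ a ∈ p.support, a ∈ A) ∧ q.length ≤ p.length := by
    obtain ⟨z, p, hp, hmax, hS4eq⟩ := hS4
    obtain ⟨pG, hpG, hpGlen, hpGsupp⟩ := PathSepAux.mapWalk p hp
    intro w' q hq hqA
    obtain ⟨hu', hw', q', hq'len, hq'path⟩ := PathSepAux.induceWalk' q hqA
    refine ⟨(z : V), pG, hpG, ?_, ?_, ?_⟩
    · intro a ha
      rw [hpGsupp] at ha
      rcases List.mem_map.mp ha with ⟨c, hc, rfl⟩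
      exact hS4U (hS4eq ▸ ⟨c, hc, rfl⟩)
    · intro a ha
      rw [hpGsupp] at ha
      rcases List.mem_map.mp ha with ⟨c, _, rfl⟩
      exact c.2
    · have hle := hmax ⟨w', hw'⟩ q' (hq'path hq)
      omega
  have H5 : ∀ (q : G.Walk x y), q.IsPath → (∀ a ∈ q.support, a ∈ A) →
      ∃ p : G.Walk x y, p.IsPath ∧ (∀ a ∈ p.support, a ∈ U) ∧
        (∀ a ∈ p.support, a ∈ A) ∧ q.length ≤ p.length := by
    intro q hq hqA
    obtain ⟨hu', hw', q', hq'len, hq'path⟩ := PathSepAux.induceWalk' q hqA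
    rcases hS5 with ⟨p, hp, hmax, hS5eq⟩ | ⟨hno, _⟩
    · obtain ⟨pG, hpG, hpGlen, hpGsupp⟩ := PathSepAux.mapWalk p hp
      refine ⟨pG, hpG, ?_, ?_, ?_⟩
      · intro a ha
        rw [hpGsupp] at ha
        rcases List.mem_map.mp ha with ⟨c, hc, rfl⟩
        exact hS5U (hS5eq ▸ ⟨c, hc, rfl⟩)
      · intro a ha
        rw [hpGsupp] at ha
        rcases List.mem_map.mp ha with ⟨c, _, rfl⟩
        exact c.2
      · have hle := hmax q' (hq'path hq)
        omega
    · exact absurd ⟨q', hq'path hq⟩ hno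
  have H6 : ∀ (z' w' : V) (p' : G.Walk x z') (q' : G.Walk y w'), p'.IsPath → q'.IsPath →
      (∀ a ∈ p'.support, a ∈ A) → (∀ a ∈ q'.support, a ∈ A) →
      (∀ a ∈ p'.support, a ∉ q'.support) →
      ∃ (z w : V) (p : G.Walk x z) (q : G.Walk y w), p.IsPath ∧ q.IsPath ∧
        (∀ a ∈ p.support, a ∉ q.support) ∧ (∀ a ∈ p.support, a ∈ U) ∧
        (∀ a ∈ q.support, a ∈ U) ∧ (∀ a ∈ p.support, a ∈ A) ∧
        (∀ a ∈ q.support, a ∈ A) ∧ p'.length + q'.length ≤ p.length + q.length := by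
    obtain ⟨z, w, p, q, hp, hq, hdisj, hmax, hS6eq⟩ := hS6
    obtain ⟨pG, hpG, hpGlen, hpGsupp⟩ := PathSepAux.mapWalk p hp
    obtain ⟨qG, hqG, hqGlen, hqGsupp⟩ := PathSepAux.mapWalk q hq
    intro z' w' p' q' hp' hq' hp'A hq'A hdisj'
    obtain ⟨hx', hz', p'', hp''len, hp''path, hp''supp⟩ := PathSepAux.induceWalk2 p' hp'A
    obtain ⟨hy', hw', q'', hq''len, hq''path, hq''supp⟩ := PathSepAux.induceWalk2 q' hq'A
    have hdisj'' : ∀ a ∈ p''.support, a ∉ q''.support := by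
      intro a ha hb
      have h1 : (a : V) ∈ p'.support := by
        rw [← hp''supp]; exact List.mem_map_of_mem ha
      have h2 : (a : V) ∈ q'.support := by
        rw [← hq''supp]; exact List.mem_map_of_mem hb
      exact hdisj' _ h1 h2
    have hle := hmax ⟨z', hz'⟩ ⟨w', hw'⟩ p'' q'' (hp''path hp') (hq''path hq') hdisj''
    refine ⟨(z : V), (w : V), pG, qG, hpG, hqG, ?_, ?_, ?_, ?_, ?_, ?_⟩
    · intro a ha hb
      rw [hpGsupp] at ha
      rw [hqGsupp] at hb
      rcases List.mem_map.mp ha with ⟨c, hc, rfl⟩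
      rcases List.mem_map.mp hb with ⟨d, hd, hdc⟩
      have : d = c := Subtype.val_injective hdc
      exact hdisj c hc (this ▸ hd)
    · intro a ha
      rw [hpGsupp] at ha
      rcases List.mem_map.mp ha with ⟨c, hc, rfl⟩
      exact hS6U (hS6eq ▸ Or.inl ⟨c, hc, rfl⟩)
    · intro a ha
      rw [hqGsupp] at ha
      rcases List.mem_map.mp ha with ⟨c, hc, rfl⟩
      exact hS6U (hS6eq ▸ Or.inr ⟨c, hc, rfl⟩)
    · intro a ha
      rw [hpGsupp] at ha
      rcases List.mem_map.mp ha with ⟨c, _, rfl⟩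
      exact c.2
    · intro a ha
      rw [hqGsupp] at ha
      rcases List.mem_map.mp ha with ⟨c, _, rfl⟩
      exact c.2
    · omega
  -- the swapped versions
  have hAB' : A ∩ B = {y, x} := by rw [hAB, Set.pair_comm]
  have H5' : ∀ (q : G.Walk y x), q.IsPath → (∀ a ∈ q.support, a ∈ A) →
      ∃ p : G.Walk y x, p.IsPath ∧ (∀ a ∈ p.support, a ∈ U) ∧
        (∀ a ∈ p.support, a ∈ A) ∧ q.length ≤ p.length := by
    intro q hq hqA
    obtain ⟨p, hp, hpU, hpA, hl⟩ := H5 q.reverse hq.reverse (by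
      intro a ha
      rw [Walk.support_reverse, List.mem_reverse] at ha
      exact hqA a ha)
    rw [Walk.length_reverse] at hl
    refine ⟨p.reverse, hp.reverse, ?_, ?_, ?_⟩
    · intro a ha
      rw [Walk.support_reverse, List.mem_reverse] at ha
      exact hpU a ha
    · intro a ha
      rw [Walk.support_reverse, List.mem_reverse] at ha
      exact hpA a ha
    · rw [Walk.length_reverse]
      exact hl
  have H6' : ∀ (z' w' : V) (p' : G.Walk y z') (q' : G.Walk x w'), p'.IsPath → q'.IsPath →
      (∀ a ∈ p'.support, a ∈ A) → (∀ a ∈ q'.support, a ∈ A) →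
      (∀ a ∈ p'.support, a ∉ q'.support) →
      ∃ (z w : V) (p : G.Walk y z) (q : G.Walk x w), p.IsPath ∧ q.IsPath ∧
        (∀ a ∈ p.support, a ∉ q.support) ∧ (∀ a ∈ p.support, a ∈ U) ∧
        (∀ a ∈ q.support, a ∈ U) ∧ (∀ a ∈ p.support, a ∈ A) ∧
        (∀ a ∈ q.support, a ∈ A) ∧ p'.length + q'.length ≤ p.length + q.length := by
    intro z' w' p' q' hp' hq' hpA hqA hdisj
    obtain ⟨z, w, p, q, hp, hq, hd, hpU, hqU, hpA2, hqA2, hsum⟩ :=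
      H6 w' z' q' p' hq' hp' hqA hpA (fun a ha hb => hdisj a hb ha)
    exact ⟨w, z, q, p, hq, hp, (fun a ha hb => hd a hb ha), hqU, hpU, hqA2, hpA2, by omega⟩
  -- main case analysis at the level of G-walks
  have main : PathSepAux.GoodIn G k A ∨ PathSepAux.GoodIn G k U := by
    by_cases hxP : x ∈ P.support
    · by_cases hyP : y ∈ P.support
      · rcases PathSepAux.split3 P hxP hyP with ⟨Q1, Q2, Q3, hPeq⟩ | ⟨Q1, Q2, Q3, hPeq⟩
        · rw [hPeq] at hP hkP
          exact PathSepAux.aux_both hcov hadj hAB hxy hBU HX HY HXA HYA H5 H6 Q1 Q2 Q3 hP hkP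
        · rw [hPeq] at hP hkP
          exact PathSepAux.aux_both hcov hadj hAB' hxy.symm hBU HY HX HYA HXA H5' H6'
            Q1 Q2 Q3 hP hkP
      · exact PathSepAux.aux_single hcov hadj hAB hxy hBU HX P hP hkP hxP hyP
    · by_cases hyP : y ∈ P.support
      · exact PathSepAux.aux_single hcov hadj hAB' hxy.symm hBU HY P hP hkP hyP hxP
      · have intP : ∀ z ∈ P.support, z = pu ∨ z = pv ∨ z ∉ A ∩ B := by
          intro z hz
          refine Or.inr (Or.inr ?_)
          rw [hAB]
          rintro (rfl | rfl)
          · exact hxP hz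
          · exact hyP hz
        rcases PathSepAux.side A B hcov hadj P hP intP with h | h
        · exact Or.inl ⟨pu, pv, P, hP, hkP, h⟩
        · exact Or.inr ⟨pu, pv, P, hP, hkP, fun z hz => hBU (h z hz)⟩
  rcases main with ⟨a, b, Q, hQ, hkQ, hsup⟩ | ⟨a, b, Q, hQ, hkQ, hsup⟩
  · left
    obtain ⟨ha, hb, q, hql, hqp⟩ := PathSepAux.induceWalk' Q hsup
    exact ⟨⟨a, ha⟩, ⟨b, hb⟩, q, hqp hQ, by omega⟩
  · right
    obtain ⟨ha, hb, q, hql, hqp⟩ := PathSepAux.induceWalk' Q hsup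
    exact ⟨⟨a, ha⟩, ⟨b, hb⟩, q, hqp hQ, by omega⟩
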